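/- Let R be a Noetherian local domain and P a nonzero nonmaximal prime ideal of R. There is a one-to-one correspondence between infinite sequences {R_n} of local quadratic transforms of R_0 = R along R_P (i.e., with ⋃_n R_n ⊆ R_P) and infinite sequences of local quadratic transforms of R/P; the sequence corresponding to {R_n} is {R_n/(PR_P ∩ R_n)}. -/

import Mathlib

section GenLQT

variable (F : Type) [Field F]

/-- The maximal ideal (as a set) of a local subring `A` of a field `F`: the nonunits of
`A`. -/
def genMaxSet (A : Subring F) : Set F :=
  {a | a ∈ A ∧ ¬ ∃ b ∈ A, a * b = 1}

/-- The ring `A[m_A/x]`: the subring of `F` generated by `A` and the quotients `a/x` for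
`a` in the maximal ideal of `A`. -/
def genBlowup (A : Subring F) (x : F) : Subring F :=
  Subring.closure ((A : Set F) ∪ {y | ∃ a ∈ genMaxSet F A, y * x = a})

/-- `A'` is a local quadratic transform of the local subring `A` of `F`: for some nonzero
`x ∈ m_A`, `A'` is the localization of `A[m_A/x]` at a prime ideal containing `m_A`. -/
def IsGenLQT (A A' : Subring F) : Prop :=
  ∃ x ∈ genMaxSet F A, x ≠ 0 ∧
    ∃ Q : Ideal (genBlowup F A x), Q.IsPrime ∧
      (∀ a ∈ genMaxSet F A, ∃ q : genBlowup F A x, q ∈ Q ∧ (q : F) = a) ∧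
      (A' : Set F) = {y | ∃ b s : genBlowup F A x, s ∉ Q ∧ y * (s : F) = (b : F)}

end GenLQT

section Aux

variable {F : Type} [Field F] {K : Type} [Field K]

/-- The set `P R_P` inside `F`. -/
def PPset {R : Subring F} (P : Ideal R) : Set F :=
  {y | ∃ p s : R, p ∈ P ∧ s ∉ P ∧ y * (s : F) = (p : F)}

/-- Localization of a subring `B` of a field at (the complement of) an ideal `Q`. -/
def locSet (B : Subring F) (Q : Ideal B) : Set F :=
  {y | ∃ b s : B, s ∉ Q ∧ y * (s : F) = (b : F)}

/-- `A` is "local": `1 + m` consists of units. -/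
def IsLocSet (A : Subring F) : Prop :=
  ∀ y ∈ genMaxSet F A, ∃ b ∈ A, (1 + y) * b = 1

variable {R RP : Subring F} {P : Ideal R} {α : RP →+* K}

theorem coe_ne_zero_of_not_mem {B : Subring F} {Q : Ideal B} {s : B} (hs : s ∉ Q) :
    (s : F) ≠ 0 := by
  intro h
  exact hs (by simpa [show s = 0 from Subtype.ext h] using Q.zero_mem)

theorem subset_locSet {B : Subring F} {Q : Ideal B} (hQ : Q.IsPrime) :
    (B : Set F) ⊆ locSet B Q := by
  intro b hb
  exact ⟨⟨b, hb⟩, 1, by simpa using hQ.ne_top ∘ (Ideal.eq_top_of_isUnit_mem Q · isUnit_one),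
    by simp⟩

theorem inv_mem_locSet {B : Subring F} {Q : Ideal B} {s : B} (hs : s ∉ Q) :
    ((s : F))⁻¹ ∈ locSet B Q :=
  ⟨1, s, hs, by rw [inv_mul_cancel₀ (coe_ne_zero_of_not_mem hs)]; simp⟩

/-- `locSet` as a subring. -/
def locSubring (B : Subring F) (Q : Ideal B) (hQ : Q.IsPrime) : Subring F where
  carrier := locSet B Q
  one_mem' := subset_locSet hQ B.one_mem
  zero_mem' := ⟨0, 1, by simpa using hQ.ne_top ∘ (Ideal.eq_top_of_isUnit_mem Q · isUnit_one),
    by simp⟩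
  mul_mem' := by
    rintro y y' ⟨b, s, hs, hys⟩ ⟨b', s', hs', hys'⟩
    refine ⟨b * b', s * s', fun h => ?_, ?_⟩
    · rcases hQ.mem_or_mem h with h | h
      exacts [hs h, hs' h]
    · push_cast; rw [show y * y' * ((s:F) * s') = (y * s) * (y' * s') by ring, hys, hys']
  add_mem' := by
    rintro y y' ⟨b, s, hs, hys⟩ ⟨b', s', hs', hys'⟩
    refine ⟨b * s' + b' * s, s * s', fun h => ?_, ?_⟩
    · rcases hQ.mem_or_mem h with h | h
      exacts [hs h, hs' h]
    · push_cast
      rw [show (y + y') * ((s:F) * s') = (y * s) * s' + (y' * s') * s by ring, hys, hys']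
  neg_mem' := by
    rintro y ⟨b, s, hs, hys⟩
    exact ⟨-b, s, hs, by push_cast; rw [neg_mul, hys]⟩

@[simp] theorem coe_locSubring {B : Subring F} {Q : Ideal B} (hQ : Q.IsPrime) :
    (locSubring B Q hQ : Set F) = locSet B Q := rfl

theorem one_not_mem_P (hPp : P.IsPrime) : (1 : R) ∉ P := by
  intro h
  exact hPp.ne_top (Ideal.eq_top_of_isUnit_mem P h isUnit_one)

theorem zero_mem_PP (hPp : P.IsPrime) : (0 : F) ∈ PPset P :=
  ⟨0, 1, P.zero_mem, one_not_mem_P hPp, by simp⟩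

section hRP

variable (hPp : P.IsPrime)
  (hRP : (RP : Set F) = {y : F | ∃ a s : R, s ∉ P ∧ y * (s : F) = (a : F)})

include hPp hRP

theorem PP_subset_RP : PPset P ⊆ (RP : Set F) := by
  rintro y ⟨p, s, _, hs, h⟩
  rw [hRP]; exact ⟨p, s, hs, h⟩

theorem R_le_RP : R ≤ RP := by
  intro r hr
  rw [← SetLike.mem_coe, hRP]
  exact ⟨⟨r, hr⟩, 1, one_not_mem_P hPp, by simp⟩

theorem exists_inv_RP {y : F} (hy : y ∈ RP) (hyP : y ∉ PPset P) :
    ∃ z ∈ RP, y * z = 1 := by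
  rw [← SetLike.mem_coe, hRP] at hy
  obtain ⟨a, s, hs, h⟩ := hy
  have ha : a ∉ P := fun haP => hyP ⟨a, s, haP, hs, h⟩
  have ha0 : (a : F) ≠ 0 := fun h0 => ha (by simpa [show a = 0 from Subtype.ext h0] using P.zero_mem)
  refine ⟨(s : F) * (a : F)⁻¹, ?_, ?_⟩
  · rw [← SetLike.mem_coe, hRP]
    exact ⟨s, a, ha, by field_simp⟩
  · field_simp
    rw [mul_comm (y : F) (s:F)] at h ⊢
    rw [h]

theorem not_unit_PP {y z : F} (hy : y ∈ PPset P) (hz : z ∈ RP) : y * z ≠ 1 := by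
  obtain ⟨p, s, hp, hs, h1⟩ := hy
  rw [← SetLike.mem_coe, hRP] at hz
  obtain ⟨b, t, ht, h2⟩ := hz
  intro h
  have key : ((s * t : R) : F) = ((p * b : R) : F) := by
    push_cast
    calc (s:F) * t = (y * z) * ((s:F) * t) := by rw [h, one_mul]
    _ = (y * s) * (z * t) := by ring
    _ = (p : F) * b := by rw [h1, h2]
  have : (s * t : R) ∈ P := Subtype.ext key ▸ P.mul_mem_right b hp
  rcases hPp.mem_or_mem this with h | h
  exacts [hs h, ht h]

theorem PP_mul_RP {x y : F} (hx : x ∈ PPset P) (hy : y ∈ RP) : y * x ∈ PPset P := by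
  obtain ⟨p, s, hp, hs, h1⟩ := hx
  rw [← SetLike.mem_coe, hRP] at hy
  obtain ⟨b, t, ht, h2⟩ := hy
  refine ⟨b * p, t * s, P.mul_mem_left b hp, fun h => ?_, ?_⟩
  · rcases hPp.mem_or_mem h with h | h
    exacts [ht h, hs h]
  · push_cast
    calc y * x * ((t:F) * s) = (y * t) * (x * s) := by ring
    _ = (b : F) * p := by rw [h1, h2]

end hRP

/-- Helper for applying `α` to explicit elements. -/
theorem alpha_mk_mul {y z : F} (hy : y ∈ RP) (hz : z ∈ RP) (h : y * z ∈ RP) :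
    α ⟨y * z, h⟩ = α ⟨y, hy⟩ * α ⟨z, hz⟩ := by
  rw [show (⟨y * z, h⟩ : RP) = ⟨y, hy⟩ * ⟨z, hz⟩ from rfl, map_mul]

theorem alpha_mk_one (h : (1 : F) ∈ RP) : α ⟨1, h⟩ = 1 := by
  rw [show (⟨1, h⟩ : RP) = 1 from rfl, map_one]

theorem alpha_mk_zero (h : (0 : F) ∈ RP) : α ⟨0, h⟩ = 0 := by
  rw [show (⟨0, h⟩ : RP) = 0 from rfl, map_zero]

theorem alpha_mk_add {y z : F} (hy : y ∈ RP) (hz : z ∈ RP) (h : y + z ∈ RP) :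
    α ⟨y + z, h⟩ = α ⟨y, hy⟩ + α ⟨z, hz⟩ := by
  rw [show (⟨y + z, h⟩ : RP) = ⟨y, hy⟩ + ⟨z, hz⟩ from rfl, map_add]

theorem alpha_mk_sub {y z : F} (hy : y ∈ RP) (hz : z ∈ RP) (h : y - z ∈ RP) :
    α ⟨y - z, h⟩ = α ⟨y, hy⟩ - α ⟨z, hz⟩ := by
  rw [show (⟨y - z, h⟩ : RP) = ⟨y, hy⟩ - ⟨z, hz⟩ from rfl, map_sub]

theorem alpha_mk_eq {y z : F} (hy : y ∈ RP) (hz : z ∈ RP) (h : y = z) :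
    α ⟨y, hy⟩ = α ⟨z, hz⟩ := by subst h; rfl

/-- The image `R_n/(P R_P ∩ R_n)` of a subring of `F` contained in `R_P`. -/
def barS (α : RP →+* K) (A : Subring F) : Subring K :=
  Subring.map α (Subring.comap RP.subtype A)

theorem mem_barS {A : Subring F} {z : K} :
    z ∈ barS α A ↔ ∃ (y : F) (hy : y ∈ RP), y ∈ A ∧ α ⟨y, hy⟩ = z := by
  constructor
  · rintro ⟨⟨y, hy⟩, hmem, rfl⟩
    exact ⟨y, hy, hmem, rfl⟩
  · rintro ⟨y, hy, hmem, rfl⟩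
    exact ⟨⟨y, hy⟩, hmem, rfl⟩

theorem alpha_mem_barS {A : Subring F} {y : F} (hy : y ∈ RP) (hA : y ∈ A) :
    α ⟨y, hy⟩ ∈ barS α A :=
  mem_barS.2 ⟨y, hy, hA, rfl⟩

end Aux
section Aux2

set_option linter.unusedSectionVars false

variable {F : Type} [Field F] {K : Type} [Field K]
variable {R RP : Subring F} {P : Ideal R} {α : RP →+* K}

/- ### Structural lemmas about LQTs -/

theorem IsGenLQT.le {A A' : Subring F} (h : IsGenLQT F A A') : A ≤ A' := by
  obtain ⟨x, hx, hx0, Q, hQ, hmQ, hset⟩ := h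
  intro a ha
  have : a ∈ (A' : Set F) := by
    rw [hset]
    exact subset_locSet hQ (Subring.subset_closure (Or.inl ha))
  exact this

theorem IsGenLQT.maxSet_mono {A A' : Subring F} (h : IsGenLQT F A A') :
    genMaxSet F A ⊆ genMaxSet F A' := by
  obtain ⟨x, hx, hx0, Q, hQ, hmQ, hset⟩ := h
  intro a ha
  obtain ⟨q, hq, hqa⟩ := hmQ a ha
  refine ⟨by
    rw [← SetLike.mem_coe, hset]
    exact subset_locSet hQ (hqa ▸ q.2), ?_⟩
  rintro ⟨y, hy, hay⟩
  rw [← SetLike.mem_coe, hset] at hy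
  obtain ⟨b, s, hs, hys⟩ := hy
  have : (s : F) = ((q * b : genBlowup F A x) : F) := by
    push_cast
    rw [hqa]
    calc (s : F) = a * y * s := by rw [hay, one_mul]
    _ = a * b := by rw [mul_assoc, hys]
  exact hs (Subtype.ext this ▸ Q.mul_mem_right b hq)

theorem IsGenLQT.isLocSet {A A' : Subring F} (h : IsGenLQT F A A') : IsLocSet A' := by
  obtain ⟨x, hx, hx0, Q, hQ, hmQ, hset⟩ := h
  intro y hy
  obtain ⟨hyA', hynu⟩ := hy
  rw [← SetLike.mem_coe, hset] at hyA'
  obtain ⟨b, s, hs, hys⟩ := hyA'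
  have hbQ : b ∈ Q := by
    by_contra hbQ
    refine hynu ⟨(b : F)⁻¹ * s, ?_, ?_⟩
    · rw [← SetLike.mem_coe, hset]
      refine ⟨s * s, s * b, fun hmem => ?_, ?_⟩
      · rcases hQ.mem_or_mem hmem with h | h
        exacts [hs h, hbQ h]
      · push_cast
        field_simp [coe_ne_zero_of_not_mem hbQ]
    · rw [mul_comm ((b:F)⁻¹), ← mul_assoc, hys, mul_inv_cancel₀ (coe_ne_zero_of_not_mem hbQ)]
  have hsb : s + b ∉ Q := fun hmem => hs (by simpa using Q.sub_mem hmem hbQ)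
  refine ⟨(s : F) * ((s : F) + b)⁻¹, ?_, ?_⟩
  · rw [← SetLike.mem_coe, hset]
    refine ⟨s, s + b, hsb, ?_⟩
    push_cast
    have : ((s : F) + b) ≠ 0 := by
      have := coe_ne_zero_of_not_mem hsb
      push_cast at this
      exact this
    field_simp
  · have h1 : (1 + y) * s = (s : F) + b := by rw [add_mul, one_mul, hys]
    have hsb0 : ((s : F) + b) ≠ 0 := by
      have := coe_ne_zero_of_not_mem hsb
      push_cast at this
      exact this
    have hs0 : (s : F) ≠ 0 := coe_ne_zero_of_not_mem hs
    field_simp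
    calc (1 + y) * s = (s : F) + b := h1
    _ = (s:F) + b := rfl

theorem isLocSet_of_isLocalRing {A : Subring F} [IsLocalRing A] : IsLocSet A := by
  intro y hy
  obtain ⟨hyA, hynu⟩ := hy
  have hnu : (⟨y, hyA⟩ : A) ∈ nonunits A := by
    intro hu
    obtain ⟨u, hu⟩ := hu
    refine hynu ⟨((u⁻¹ : Aˣ) : A), SetLike.coe_mem _, ?_⟩
    have : ((u : A) : F) * ((u⁻¹ : Aˣ) : A) = ((1 : A) : F) := by
      rw [show ((u : A) : F) * ((u⁻¹ : Aˣ) : A) = (((u : A) * ((u⁻¹ : Aˣ) : A) : A) : F) by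
        push_cast; ring]
      congr 1
      rw [← Units.val_mul, mul_inv_cancel, Units.val_one]
    rw [hu] at this
    simpa using this
  have : IsUnit (1 + (⟨y, hyA⟩ : A)) := by
    have := IsLocalRing.isUnit_one_sub_self_of_mem_nonunits (-(⟨y, hyA⟩ : A)) (by
      intro hu
      exact hnu (by simpa using hu.neg))
    simpa [sub_neg_eq_add] using this
  obtain ⟨u, hu⟩ := this
  refine ⟨((u⁻¹ : Aˣ) : A), SetLike.coe_mem _, ?_⟩
  have : (((1 + (⟨y, hyA⟩ : A)) * ((u⁻¹ : Aˣ) : A) : A) : F) = ((1 : A) : F) := by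
    congr 1
    rw [← hu, ← Units.val_mul, mul_inv_cancel, Units.val_one]
  push_cast at this
  convert this using 2

end Aux2
section Aux3

set_option linter.unusedSectionVars false
set_option maxHeartbeats 1000000

variable {F : Type} [Field F] {K : Type} [Field K]
variable {R RP : Subring F} {P : Ideal R} {α : RP →+* K}
variable (hPp : P.IsPrime)
  (hRP : (RP : Set F) = {y : F | ∃ a s : R, s ∉ P ∧ y * (s : F) = (a : F)})
  (hker : ∀ (y : F) (hy : y ∈ RP), α ⟨y, hy⟩ = 0 ↔ y ∈ PPset P)

include hPp hRP hker

/-- Units and nonunits correspond under `α`. -/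
theorem barS_maxSet {A : Subring F} (hA : A ≤ RP) (hL : IsLocSet A) {z : K} :
    z ∈ genMaxSet K (barS α A) ↔
      ∃ (y : F) (hy : y ∈ RP), y ∈ genMaxSet F A ∧ α ⟨y, hy⟩ = z := by
  constructor
  · rintro ⟨hz, hznu⟩
    obtain ⟨y, hy, hyA, rfl⟩ := mem_barS.1 hz
    refine ⟨y, hy, ⟨hyA, ?_⟩, rfl⟩
    rintro ⟨b, hb, hyb⟩
    refine hznu ⟨α ⟨b, hA hb⟩, alpha_mem_barS _ hb, ?_⟩
    rw [← alpha_mk_mul hy (hA hb) (by rw [hyb]; exact RP.one_mem),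
      alpha_mk_eq _ RP.one_mem hyb, alpha_mk_one]
  · rintro ⟨y, hy, ⟨hyA, hynu⟩, rfl⟩
    refine ⟨alpha_mem_barS hy hyA, ?_⟩
    rintro ⟨c, hc, hyc⟩
    obtain ⟨w, hw, hwA, rfl⟩ := mem_barS.1 hc
    have hywRP : y * w ∈ RP := mul_mem hy hw
    have hd : y * w - 1 ∈ PPset P := by
      rw [← hker _ (sub_mem hywRP RP.one_mem),
        alpha_mk_sub hywRP RP.one_mem, alpha_mk_mul hy hw, alpha_mk_one, hyc, sub_self]
    have hdA : y * w - 1 ∈ A := sub_mem (mul_mem hyA hwA) A.one_mem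
    have hdm : y * w - 1 ∈ genMaxSet F A := by
      refine ⟨hdA, ?_⟩
      rintro ⟨e, he, hde⟩
      exact not_unit_PP hPp hRP hd (hA he) hde
    obtain ⟨b, hb, hbeq⟩ := hL _ hdm
    refine hynu ⟨w * b, mul_mem hwA hb, ?_⟩
    calc y * (w * b) = (1 + (y * w - 1)) * b := by ring
    _ = 1 := hbeq

/-- `barS` of a closure of a set contained in `RP`. -/
theorem barS_closure (S : Set F) (hS : S ⊆ RP) :
    barS α (Subring.closure S) =
      Subring.closure {z : K | ∃ (y : F) (hy : y ∈ RP), y ∈ S ∧ α ⟨y, hy⟩ = z} := by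
  classical
  set T : Set RP := {w : RP | (w : F) ∈ S} with hT
  have hTS : Subring.comap RP.subtype (Subring.closure S) = Subring.closure T := by
    apply le_antisymm
    · intro w hw
      have hw' : (w : F) ∈ Subring.closure S := hw
      have key : ∀ (y : F) (_ : y ∈ Subring.closure S),
          y ∈ RP ∧ ∀ h : y ∈ RP, (⟨y, h⟩ : RP) ∈ Subring.closure T := by
        intro y hy
        induction hy using Subring.closure_induction with
        | mem a ha =>
          refine ⟨hS ha, fun h => Subring.subset_closure ?_⟩
          exact ha
        | zero => exact ⟨RP.zero_mem, fun h => by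
            rw [show (⟨(0:F), h⟩ : RP) = 0 from rfl]; exact zero_mem _⟩
        | one => exact ⟨RP.one_mem, fun h => by
            rw [show (⟨(1:F), h⟩ : RP) = 1 from rfl]; exact one_mem _⟩
        | add a b ha hb iha ihb =>
          refine ⟨add_mem iha.1 ihb.1, fun h => ?_⟩
          rw [show (⟨a + b, h⟩ : RP) = ⟨a, iha.1⟩ + ⟨b, ihb.1⟩ from rfl]
          exact add_mem (iha.2 _) (ihb.2 _)
        | neg a ha iha =>
          refine ⟨neg_mem iha.1, fun h => ?_⟩
          rw [show (⟨-a, h⟩ : RP) = -⟨a, iha.1⟩ from rfl]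
          exact neg_mem (iha.2 _)
        | mul a b ha hb iha ihb =>
          refine ⟨mul_mem iha.1 ihb.1, fun h => ?_⟩
          rw [show (⟨a * b, h⟩ : RP) = ⟨a, iha.1⟩ * ⟨b, ihb.1⟩ from rfl]
          exact mul_mem (iha.2 _) (ihb.2 _)
      have := (key _ hw').2 w.2
      simpa using this
    · rw [Subring.closure_le]
      intro w hw
      exact Subring.subset_closure (hw : (w : F) ∈ S)
  rw [barS, hTS, RingHom.map_closure]
  congr 1
  ext z
  constructor
  · rintro ⟨w, hw, rfl⟩
    exact ⟨(w : F), w.2, hw, rfl⟩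
  · rintro ⟨y, hy, hyS, rfl⟩
    exact ⟨⟨y, hy⟩, hyS, rfl⟩

theorem genBlowup_le_RP {A : Subring F} (hA : A ≤ RP) {x : F}
    (hx : x ∈ genMaxSet F A) (hxP : x ∉ PPset P) : genBlowup F A x ≤ RP := by
  rw [genBlowup, Subring.closure_le]
  rintro y (hy | ⟨a, ha, hya⟩)
  · exact hA hy
  · obtain ⟨z, hz, hxz⟩ := exists_inv_RP hPp hRP (hA hx.1) hxP
    have : y = a * z := by
      calc y = y * (x * z) := by rw [hxz, mul_one]
      _ = (y * x) * z := by ring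
      _ = a * z := by rw [hya]
    rw [this]
    exact mul_mem (hA ha.1) hz

theorem barS_genBlowup {A : Subring F} (hA : A ≤ RP) (hL : IsLocSet A)
    {x : F} (hx : x ∈ genMaxSet F A) (hxP : x ∉ PPset P) :
    barS α (genBlowup F A x) = genBlowup K (barS α A) (α ⟨x, hA hx.1⟩) := by
  obtain ⟨z, hz, hxz⟩ := exists_inv_RP hPp hRP (hA hx.1) hxP
  have hx0 : x ≠ 0 := by
    rintro rfl
    simp at hxz
  have hxbar0 : α ⟨x, hA hx.1⟩ ≠ 0 := fun h0 => hxP ((hker x (hA hx.1)).1 h0)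
  have hS : ((A : Set F) ∪ {y | ∃ a ∈ genMaxSet F A, y * x = a}) ⊆ (RP : Set F) := by
    have := genBlowup_le_RP hPp hRP hker hA hx hxP
    rw [genBlowup, Subring.closure_le] at this
    exact this
  rw [genBlowup, barS_closure hPp hRP hker _ hS, genBlowup]
  congr 1
  ext w
  constructor
  · rintro ⟨y, hy, (hyA | ⟨a, ha, hya⟩), rfl⟩
    · exact Or.inl (alpha_mem_barS hy hyA)
    · refine Or.inr ⟨α ⟨a, hA ha.1⟩, ?_, ?_⟩
      · exact (barS_maxSet hPp hRP hker hA hL).2 ⟨a, hA ha.1, ha, rfl⟩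
      · rw [← alpha_mk_mul hy (hA hx.1) (by rw [hya]; exact hA ha.1)]
        exact alpha_mk_eq _ _ hya
  · rintro (hw | ⟨c, hc, hwc⟩)
    · obtain ⟨y, hy, hyA, rfl⟩ := mem_barS.1 hw
      exact ⟨y, hy, Or.inl hyA, rfl⟩
    · obtain ⟨a, haRP, ha, rfl⟩ := (barS_maxSet hPp hRP hker hA hL).1 hc
      refine ⟨a * z, mul_mem haRP hz, Or.inr ⟨a, ha, ?_⟩, ?_⟩
      · calc a * z * x = a * (x * z) := by ring
        _ = a := by rw [hxz, mul_one]
      · have h1 : (a * z) * x = a := by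
          calc a * z * x = a * (x * z) := by ring
          _ = a := by rw [hxz, mul_one]
        have hm : (a * z) * x ∈ RP := mul_mem (mul_mem haRP hz) (hA hx.1)
        have := alpha_mk_mul (α := α) (mul_mem haRP hz) (hA hx.1) hm
        rw [alpha_mk_eq hm haRP h1] at this
        refine mul_right_cancel₀ hxbar0 ?_
        rw [← this, hwc]
end Aux3
section Aux4

set_option linter.unusedSectionVars false
set_option maxHeartbeats 1000000

variable {F : Type} [Field F] {K : Type} [Field K]
variable {R RP : Subring F} {P : Ideal R} {α : RP →+* K}

/-- Corestriction of `α` to a map `B → B/(P R_P ∩ B)`. -/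
def toBar (α : RP →+* K) (B : Subring F) (hB : B ≤ RP) : B →+* barS α B where
  toFun b := ⟨α ⟨(b : F), hB b.2⟩, alpha_mem_barS _ b.2⟩
  map_one' := Subtype.ext (alpha_mk_one RP.one_mem)
  map_mul' a b := Subtype.ext (alpha_mk_mul (hB a.2) (hB b.2) _)
  map_zero' := Subtype.ext (alpha_mk_zero RP.zero_mem)
  map_add' a b := Subtype.ext (alpha_mk_add (hB a.2) (hB b.2) _)

theorem toBar_coe {B : Subring F} (hB : B ≤ RP) (b : B) :
    ((toBar α B hB b : barS α B) : K) = α ⟨(b : F), hB b.2⟩ := rfl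

theorem toBar_surjective {B : Subring F} (hB : B ≤ RP) :
    Function.Surjective (toBar α B hB) := by
  rintro ⟨z, hz⟩
  obtain ⟨y, hy, hyB, rfl⟩ := mem_barS.1 hz
  exact ⟨⟨y, hyB⟩, Subtype.ext rfl⟩

section main

variable (hPp : P.IsPrime)
  (hRP : (RP : Set F) = {y : F | ∃ a s : R, s ∉ P ∧ y * (s : F) = (a : F)})
  (hker : ∀ (y : F) (hy : y ∈ RP), α ⟨y, hy⟩ = 0 ↔ y ∈ PPset P)

include hPp hRP hker

/-- The image of a localization is the localization of the image. -/
theorem barS_locSet {B : Subring F} (hB : B ≤ RP) {C : Subring K}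
    (ψ : B →+* C) (hψcoe : ∀ b : B, ((ψ b : C) : K) = α ⟨(b : F), hB b.2⟩)
    (hψsurj : Function.Surjective ψ)
    (Q' : Ideal C) {A' : Subring F}
    (hA' : (A' : Set F) = locSet B (Ideal.comap ψ Q')) :
    (barS α A' : Set K) = locSet C Q' := by
  ext z
  constructor
  · rintro hz
    obtain ⟨y, hy, hyA', rfl⟩ := mem_barS.1 hz
    rw [← SetLike.mem_coe, hA'] at hyA'
    obtain ⟨b, s, hs, hys⟩ := hyA'
    refine ⟨ψ b, ψ s, fun hmem => hs (Ideal.mem_comap.2 hmem), ?_⟩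
    rw [hψcoe, hψcoe, ← alpha_mk_mul hy (hB s.2) (hys ▸ hB b.2)]
    exact alpha_mk_eq _ _ hys
  · rintro ⟨b', s', hs', heq⟩
    obtain ⟨s, rfl⟩ := hψsurj s'
    obtain ⟨b, rfl⟩ := hψsurj b'
    have hsP : (s : F) ∉ PPset P := by
      intro hsP
      have h0 : ((ψ s : C) : K) = 0 := by rw [hψcoe]; exact (hker _ _).2 hsP
      exact hs' (by rw [show ψ s = 0 from Subtype.ext h0]; exact Q'.zero_mem)
    obtain ⟨z₂, hz₂, hsz₂⟩ := exists_inv_RP hPp hRP (hB s.2) hsP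
    set y := (b : F) * z₂ with hy
    have hys : y * (s : F) = (b : F) := by
      rw [hy, mul_assoc, mul_comm z₂, hsz₂, mul_one]
    have hyA' : y ∈ A' := by
      rw [← SetLike.mem_coe, hA']
      have hsQ : s ∉ Ideal.comap ψ Q' := fun hmem => hs' (Ideal.mem_comap.1 hmem)
      exact ⟨b, s, hsQ, hys⟩
    have hyRP : y ∈ RP := mul_mem (hB b.2) hz₂
    have hψs0 : ((ψ s : C) : K) ≠ 0 := by
      intro h0
      exact hs' (by rw [show ψ s = 0 from Subtype.ext h0]; exact Q'.zero_mem)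
    have e1 : α ⟨y, hyRP⟩ * ((ψ s : C) : K) = ((ψ b : C) : K) := by
      rw [hψcoe, hψcoe, ← alpha_mk_mul hyRP (hB s.2) (hys ▸ hB b.2)]
      exact alpha_mk_eq _ _ hys
    have : z = α ⟨y, hyRP⟩ := by
      refine mul_right_cancel₀ hψs0 ?_
      rw [heq, e1]
    rw [this]
    exact alpha_mem_barS hyRP hyA'

theorem chart_not_PP {A : Subring F} {x : F} (hw : ∃ w ∈ genMaxSet F A, w ∉ PPset P)
    (hx0 : x ≠ 0) (hBRP : genBlowup F A x ≤ RP) : x ∉ PPset P := by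
  obtain ⟨w, hwm, hwp⟩ := hw
  intro hxPP
  have hyB : w * x⁻¹ ∈ genBlowup F A x :=
    Subring.subset_closure (Or.inr ⟨w, hwm, by field_simp⟩)
  refine hwp ?_
  have := PP_mul_RP hPp hRP hxPP (hBRP hyB)
  rwa [show w * x⁻¹ * x = w by field_simp] at this

theorem step_down {A A' : Subring F} (hA : A ≤ RP) (hA' : A' ≤ RP)
    (hL : IsLocSet A) (hw : ∃ w ∈ genMaxSet F A, w ∉ PPset P) (h : IsGenLQT F A A') :
    IsGenLQT K (barS α A) (barS α A') := by
  obtain ⟨x, hx, hx0, Q, hQ, hmQ, hset⟩ := h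
  haveI := hQ
  have hBA' : (genBlowup F A x : Set F) ⊆ (A' : Set F) := by
    rw [hset]; exact subset_locSet hQ
  have hBRP : genBlowup F A x ≤ RP := fun b hb => hA' (hBA' hb)
  have hxP : x ∉ PPset P := chart_not_PP hPp hRP hker hw hx0 hBRP
  refine ⟨α ⟨x, hA hx.1⟩, (barS_maxSet hPp hRP hker hA hL).2 ⟨x, hA hx.1, hx, rfl⟩,
    fun h0 => hxP ((hker _ _).1 h0), ?_⟩
  let e := RingEquiv.subringCongr (barS_genBlowup hPp hRP hker hA hL hx hxP)
  let ψ : genBlowup F A x →+* genBlowup K (barS α A) (α ⟨x, hA hx.1⟩) :=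
    e.toRingHom.comp (toBar α (genBlowup F A x) hBRP)
  have hψcoe : ∀ b : genBlowup F A x, ((ψ b : _) : K) = α ⟨(b : F), hBRP b.2⟩ := fun b => rfl
  have hψsurj : Function.Surjective ψ := by
    intro z
    obtain ⟨b, hb⟩ := toBar_surjective hBRP (e.symm z)
    exact ⟨b, by simp [ψ, hb]⟩
  have hk : RingHom.ker ψ ≤ Q := by
    intro b hb
    have hb0 : ((ψ b : _) : K) = 0 := by
      rw [RingHom.mem_ker.1 hb]; rfl
    rw [hψcoe] at hb0
    have hbPP : (b : F) ∈ PPset P := (hker _ _).1 hb0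
    by_contra hbQ
    have hinv : ((b : F))⁻¹ ∈ (A' : Set F) := by
      rw [hset]; exact inv_mem_locSet hbQ
    exact not_unit_PP hPp hRP hbPP (hA' hinv)
      (mul_inv_cancel₀ (coe_ne_zero_of_not_mem hbQ))
  refine ⟨Ideal.map ψ Q, Ideal.map_isPrime_of_surjective hψsurj hk, ?_, ?_⟩
  · intro c hc
    obtain ⟨a, haRP, ham, rfl⟩ := (barS_maxSet hPp hRP hker hA hL).1 hc
    obtain ⟨q, hq, hqa⟩ := hmQ a ham
    refine ⟨ψ q, Ideal.mem_map_of_mem ψ hq, ?_⟩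
    rw [hψcoe]
    exact alpha_mk_eq _ _ hqa
  · have hcomap : Ideal.comap ψ (Ideal.map ψ Q) = Q := by
      rw [Ideal.comap_map_of_surjective ψ hψsurj, ← RingHom.ker_eq_comap_bot]
      exact sup_eq_left.2 hk
    exact barS_locSet hPp hRP hker hBRP ψ hψcoe hψsurj (Ideal.map ψ Q)
      (by rw [hcomap]; exact hset)

theorem step_up {A : Subring F} {t' : Subring K} (hA : A ≤ RP) (hL : IsLocSet A)
    (h : IsGenLQT K (barS α A) t') :
    ∃ A' : Subring F, IsGenLQT F A A' ∧ A' ≤ RP ∧ barS α A' = t' := by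
  obtain ⟨xb, hxbm, hxb0, Qb, hQb, hmb, hset⟩ := h
  haveI := hQb
  obtain ⟨x, hxRP, hxm, hxeq⟩ := (barS_maxSet hPp hRP hker hA hL).1 hxbm
  subst hxeq
  have hxP : x ∉ PPset P := fun hP => hxb0 ((hker _ _).2 hP)
  have hx0 : x ≠ 0 := by
    rintro rfl
    exact hxb0 (alpha_mk_zero _)
  have hBRP : genBlowup F A x ≤ RP := genBlowup_le_RP hPp hRP hker hA hxm hxP
  set B := genBlowup F A x with hBdef
  let e := RingEquiv.subringCongr (barS_genBlowup hPp hRP hker hA hL hxm hxP)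
  let ψ : B →+* genBlowup K (barS α A) (α ⟨x, hA hxm.1⟩) := e.toRingHom.comp (toBar α B hBRP)
  have hψcoe : ∀ b : B, ((ψ b : _) : K) = α ⟨(b : F), hBRP b.2⟩ := fun b => rfl
  have hψsurj : Function.Surjective ψ := by
    intro z
    obtain ⟨b, hb⟩ := toBar_surjective hBRP (e.symm z)
    exact ⟨b, by simp [ψ, hb]⟩
  set Q : Ideal B := Ideal.comap ψ Qb with hQdef
  have hQp : Q.IsPrime := Ideal.IsPrime.comap ψ
  have hmQ : ∀ a ∈ genMaxSet F A, ∃ q : B, q ∈ Q ∧ (q : F) = a := by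
    intro a ha
    have haB : a ∈ B := Subring.subset_closure (Or.inl ha.1)
    have : α ⟨a, hBRP haB⟩ ∈ genMaxSet K (barS α A) :=
      (barS_maxSet hPp hRP hker hA hL).2 ⟨a, hBRP haB, ha, rfl⟩
    obtain ⟨qb, hqb, hqbeq⟩ := hmb _ this
    refine ⟨⟨a, haB⟩, ?_, rfl⟩
    rw [hQdef, Ideal.mem_comap]
    have : ψ ⟨a, haB⟩ = qb := Subtype.ext (by rw [hψcoe]; exact hqbeq.symm)
    rw [this]
    exact hqb
  refine ⟨locSubring B Q hQp, ⟨x, hxm, hx0, Q, hQp, hmQ, rfl⟩, ?_, ?_⟩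
  · intro y hy
    obtain ⟨b, s, hs, hys⟩ := (hy : y ∈ locSet B Q)
    have hsP : (s : F) ∉ PPset P := by
      intro hsP
      have h0 : ((ψ s : _) : K) = 0 := by rw [hψcoe]; exact (hker _ _).2 hsP
      refine hs ?_
      rw [hQdef, Ideal.mem_comap, show ψ s = 0 from Subtype.ext h0]
      exact Qb.zero_mem
    obtain ⟨z₂, hz₂, hsz₂⟩ := exists_inv_RP hPp hRP (hBRP s.2) hsP
    have : y = (b : F) * z₂ := by
      calc y = y * ((s : F) * z₂) := by rw [hsz₂, mul_one]
      _ = (y * s) * z₂ := by ring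
      _ = (b : F) * z₂ := by rw [hys]
    rw [this]
    exact mul_mem (hBRP b.2) hz₂
  · apply SetLike.coe_injective
    rw [barS_locSet hPp hRP hker hBRP ψ hψcoe hψsurj Qb rfl]
    rw [hset]
    rfl

theorem step_inj_le {A T T' : Subring F} (hA : A ≤ RP) (hT : T ≤ RP)
    (hT' : T' ≤ RP) (hL : IsLocSet A) (hw : ∃ w ∈ genMaxSet F A, w ∉ PPset P)
    (h1 : IsGenLQT F A T) (h2 : IsGenLQT F A T') (heq : barS α T = barS α T') :
    T ≤ T' := by
  have hLT' : IsLocSet T' := h2.isLocSet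
  have h2le : A ≤ T' := h2.le
  obtain ⟨x, hx, hx0, Q, hQ, hmQ, hset⟩ := h1
  obtain ⟨x', hx', hx'0, Q', hQ', hmQ', hset'⟩ := h2
  have hBT : (genBlowup F A x : Set F) ⊆ (T : Set F) := by
    rw [hset]; exact subset_locSet hQ
  have hBT'0 : (genBlowup F A x' : Set F) ⊆ (T' : Set F) := by
    rw [hset']; exact subset_locSet hQ'
  have hBRP : genBlowup F A x ≤ RP := fun b hb => hT (hBT hb)
  have hBRP' : genBlowup F A x' ≤ RP := fun b hb => hT' (hBT'0 hb)
  have hxP : x ∉ PPset P := chart_not_PP hPp hRP hker hw hx0 hBRP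
  have hx'P : x' ∉ PPset P := chart_not_PP hPp hRP hker hw hx'0 hBRP'
  -- transfer of units from T to T'
  have transfer : ∀ y : F, y ∈ T' → (∃ z ∈ (T : Set F), y * z = 1) →
      ∃ z ∈ (T' : Set F), y * z = 1 := by
    rintro y hyT' ⟨z, hzT, hyz⟩
    by_contra hnu
    have hym : y ∈ genMaxSet F T' := ⟨hyT', fun h => hnu (by
      obtain ⟨c, hc, hyc⟩ := h
      exact ⟨c, hc, hyc⟩)⟩
    have hmem : α ⟨y, hT' hyT'⟩ ∈ genMaxSet K (barS α T') :=
      (barS_maxSet hPp hRP hker hT' hLT').2 ⟨y, hT' hyT', hym, rfl⟩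
    obtain ⟨_, hno⟩ := hmem
    apply hno
    refine ⟨α ⟨z, hT hzT⟩, ?_, ?_⟩
    · rw [← heq]
      exact alpha_mem_barS _ hzT
    · rw [← alpha_mk_mul (hT' hyT') (hT hzT) (hyz ▸ RP.one_mem),
        alpha_mk_eq _ RP.one_mem hyz, alpha_mk_one]
  -- the ratios
  have hu'B : x' * x⁻¹ ∈ genBlowup F A x :=
    Subring.subset_closure (Or.inr ⟨x', hx', by rw [mul_assoc, inv_mul_cancel₀ hx0, mul_one]⟩)
  have huB : x * x'⁻¹ ∈ genBlowup F A x' :=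
    Subring.subset_closure (Or.inr ⟨x, hx, by rw [mul_assoc, inv_mul_cancel₀ hx'0, mul_one]⟩)
  have hu'T : x' * x⁻¹ ∈ (T : Set F) := hBT hu'B
  have huT' : x * x'⁻¹ ∈ (T' : Set F) := hBT'0 huB
  have huu' : (x * x'⁻¹) * (x' * x⁻¹) = 1 := by field_simp
  obtain ⟨z, hzT', huz⟩ := transfer _ huT' ⟨x' * x⁻¹, hu'T, huu'⟩
  have hu0 : x * x'⁻¹ ≠ 0 := fun h => by rw [h, zero_mul] at huu'; exact zero_ne_one huu'
  have hu'T' : x' * x⁻¹ ∈ (T' : Set F) := by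
    have : z = x' * x⁻¹ := mul_left_cancel₀ hu0 (huz.trans huu'.symm)
    exact this ▸ hzT'
  -- the blowup of chart x is contained in T'
  have hBsub : genBlowup F A x ≤ T' := by
    rw [genBlowup, Subring.closure_le]
    rintro y (hyA | ⟨a, ha, hya⟩)
    · exact h2le hyA
    · have hy2 : a * x'⁻¹ ∈ genBlowup F A x' :=
        Subring.subset_closure (Or.inr ⟨a, ha, by field_simp⟩)
      have hyv : y = (a * x'⁻¹) * (x' * x⁻¹) := by
        have : y = a * x⁻¹ := by
          rw [← hya]; field_simp
        rw [this]; field_simp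
      rw [hyv]
      exact mul_mem (hBT'0 hy2) hu'T'
  -- conclude
  intro y hyT
  rw [← SetLike.mem_coe, hset] at hyT
  obtain ⟨b, s, hs, hys⟩ := hyT
  have hsT' : (s : F) ∈ T' := hBsub s.2
  have hsinvT : ((s : F))⁻¹ ∈ (T : Set F) := by
    rw [hset]; exact inv_mem_locSet hs
  obtain ⟨z', hz'T', hsz'⟩ := transfer _ hsT'
    ⟨((s : F))⁻¹, hsinvT, mul_inv_cancel₀ (coe_ne_zero_of_not_mem hs)⟩
  have : y = (b : F) * z' := by
    calc y = y * ((s : F) * z') := by rw [hsz', mul_one]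
    _ = (y * s) * z' := by ring
    _ = (b : F) * z' := by rw [hys]
  rw [this]
  exact mul_mem (hBsub b.2) hz'T'

end main

end Aux4
set_option maxHeartbeats 1000000 in
/-- Let `R` be a Noetherian local domain with quotient field `F` and `P` a nonzero
nonmaximal prime of `R`.  Let `R_P` be the localization at `P` and `α : R_P → κ(P)` the
residue map onto the residue field `κ(P)`.  Then taking images under `α` (that is,
`R_n ↦ R_n/(PR_P ∩ R_n)`) is a one-to-one correspondence between infinite sequences of
local quadratic transforms of `R₀ = R` along `R_P` and infinite sequences of local
quadratic transforms of `R/P`. -/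
theorem lqt_sequences_along_prime_correspondence
    (F : Type) [Field F] (R : Subring F)
    [IsNoetherianRing R] [IsLocalRing R]
    (hfrac : ∀ y : F, ∃ a b : R, b ≠ 0 ∧ y * (b : F) = (a : F))
    (P : Ideal R) (hPp : P.IsPrime) (hPne : P ≠ ⊥)
    (hPnm : P ≠ IsLocalRing.maximalIdeal R)
    (RP : Subring F)
    (hRP : (RP : Set F) = {y : F | ∃ a s : R, s ∉ P ∧ y * (s : F) = (a : F)})
    (K : Type) [Field K] (α : RP →+* K) (hαsurj : Function.Surjective α)
    (hker : ∀ y : RP, α y = 0 ↔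
      ∃ p s : R, p ∈ P ∧ s ∉ P ∧ (y : F) * (s : F) = (p : F)) :
    Set.BijOn (fun (seq : ℕ → Subring F) =>
        (fun n => Subring.map α (Subring.comap RP.subtype (seq n)) : ℕ → Subring K))
      {seq | seq 0 = R ∧ ∀ n, IsGenLQT F (seq n) (seq (n + 1)) ∧ seq n ≤ RP}
      {t | t 0 = Subring.map α (Subring.comap RP.subtype R) ∧
        ∀ n, IsGenLQT K (t n) (t (n + 1))} := by
  have hker' : ∀ (y : F) (hy : y ∈ RP), α ⟨y, hy⟩ = 0 ↔ y ∈ PPset P :=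
    fun y hy => hker ⟨y, hy⟩
  -- the witness: an element of the maximal ideal of `R` not in `P R_P`
  have hwR : ∃ w ∈ genMaxSet F R, w ∉ PPset P := by
    have hle : P ≤ IsLocalRing.maximalIdeal R :=
      IsLocalRing.le_maximalIdeal hPp.ne_top
    obtain ⟨r, hrm, hrP⟩ := SetLike.exists_of_lt (lt_of_le_of_ne hle hPnm)
    refine ⟨(r : F), ⟨r.2, ?_⟩, ?_⟩
    · rintro ⟨b, hb, hrb⟩
      have : r * (⟨b, hb⟩ : R) = 1 := Subtype.ext (by push_cast; exact hrb)
      exact IsLocalRing.mem_maximalIdeal r |>.1 hrm (IsUnit.of_mul_eq_one _ this)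
    · rintro ⟨p, s, hp, hs, hws⟩
      have : r * s = p := Subtype.ext (by push_cast; exact hws)
      rcases hPp.mem_or_mem (this ▸ hp) with h | h
      exacts [hrP h, hs h]
  have hRRP : R ≤ RP := R_le_RP hPp hRP
  have hRloc : IsLocSet R := isLocSet_of_isLocalRing
  -- invariants along a sequence in the source set
  have chain : ∀ seq : ℕ → Subring F,
      (seq 0 = R ∧ ∀ n, IsGenLQT F (seq n) (seq (n + 1)) ∧ seq n ≤ RP) →
      ∀ n, IsLocSet (seq n) ∧ genMaxSet F R ⊆ genMaxSet F (seq n) := by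
    intro seq hs n
    induction n with
    | zero => exact ⟨by rw [hs.1]; exact hRloc, by rw [hs.1]⟩
    | succ n ih =>
      have hl := (hs.2 n).1
      exact ⟨hl.isLocSet, fun w hw => hl.maxSet_mono (ih.2 hw)⟩
  constructor
  · -- MapsTo
    intro seq hs
    refine ⟨?_, ?_⟩
    · show Subring.map α (Subring.comap RP.subtype (seq 0)) = _
      rw [hs.1]
    · intro n
      obtain ⟨w, hwm, hwP⟩ := hwR
      exact step_down hPp hRP hker' (hs.2 n).2 (hs.2 (n + 1)).2 (chain seq hs n).1
        ⟨w, (chain seq hs n).2 hwm, hwP⟩ (hs.2 n).1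
  constructor
  · -- InjOn
    intro s1 h1 s2 h2 heq
    have heqn : ∀ n, barS α (s1 n) = barS α (s2 n) := fun n => congrFun heq n
    funext n
    induction n with
    | zero => rw [h1.1, h2.1]
    | succ n ih =>
      obtain ⟨w, hwm, hwP⟩ := hwR
      have hwn : ∃ w ∈ genMaxSet F (s1 n), w ∉ PPset P :=
        ⟨w, (chain s1 h1 n).2 hwm, hwP⟩
      have h2' : IsGenLQT F (s1 n) (s2 (n + 1)) := ih ▸ (h2.2 n).1
      apply le_antisymm
      · exact step_inj_le hPp hRP hker' (h1.2 n).2 (h1.2 (n + 1)).2 (h2.2 (n + 1)).2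
          (chain s1 h1 n).1 hwn (h1.2 n).1 h2' (heqn (n + 1))
      · exact step_inj_le hPp hRP hker' (h1.2 n).2 (h2.2 (n + 1)).2 (h1.2 (n + 1)).2
          (chain s1 h1 n).1 hwn h2' (h1.2 n).1 (heqn (n + 1)).symm
  · -- SurjOn
    intro t ht
    let Inv : ℕ → Subring F → Prop := fun n A =>
      A ≤ RP ∧ IsLocSet A ∧ genMaxSet F R ⊆ genMaxSet F A ∧ barS α A = t n
    have inv0 : Inv 0 R := ⟨hRRP, hRloc, subset_rfl, ht.1.symm⟩
    have step : ∀ n (A : Subring F), Inv n A → ∃ A', Inv (n + 1) A' ∧ IsGenLQT F A A' := by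
      intro n A hInv
      have h : IsGenLQT K (barS α A) (t (n + 1)) := by
        rw [hInv.2.2.2]; exact ht.2 n
      obtain ⟨A', hLQT, hA'RP, hbar⟩ := step_up hPp hRP hker' hInv.1 hInv.2.1 h
      exact ⟨A', ⟨hA'RP, hLQT.isLocSet, fun w hw => hLQT.maxSet_mono (hInv.2.2.1 hw), hbar⟩,
        hLQT⟩
    choose stepF hstep1 hstep2 using step
    let g : ∀ n : ℕ, {A : Subring F // Inv n A} := fun n =>
      Nat.rec ⟨R, inv0⟩ (fun n p => ⟨stepF n p.1 p.2, hstep1 n p.1 p.2⟩) n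
    refine ⟨fun n => (g n).1, ⟨rfl, fun n => ⟨hstep2 n (g n).1 (g n).2, (g n).2.1⟩⟩, ?_⟩
    funext n
    exact (g n).2.2.2.2
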